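/- Let x₁, …, x_M be M i.i.d. random points sampled from the uniform (equi-)distribution in the unit ball 𝔹ₙ ⊂ ℝⁿ, let 0 < r, ϑ < 1, and set ρ = √(1 − r²). If M < 2(ϑ − rⁿ)/ρⁿ, then P( (xᵢ, x_M) < r ‖x_M‖ for all i = 1, …, M − 1 ) > 1 − ϑ. -/

import Mathlib

open MeasureTheory ProbabilityTheory RealInnerProductSpace Metric ENNReal

variable {n : ℕ}

local notation "E" n => EuclideanSpace ℝ (Fin n)

-- hyperplane null
lemma hyperplane_null (u : EuclideanSpace ℝ (Fin n)) (hu : ‖u‖ = 1) :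
    volume {x : EuclideanSpace ℝ (Fin n) | ⟪x, u⟫ = 0} = 0 := by
  have hne : LinearMap.ker (innerSL ℝ u : EuclideanSpace ℝ (Fin n) →ₗ[ℝ] ℝ) ≠ ⊤ := by
    intro h
    have : ⟪u, u⟫ = 0 := by
      have := LinearMap.mem_ker.mp (h ▸ Submodule.mem_top (x := u))
      simpa using this
    rw [real_inner_self_eq_norm_sq, hu] at this
    norm_num at this
  have h0 := Measure.addHaar_submodule volume (LinearMap.ker (innerSL ℝ u : EuclideanSpace ℝ (Fin n) →ₗ[ℝ] ℝ)) hne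
  have hset : {x : EuclideanSpace ℝ (Fin n) | ⟪x, u⟫ = 0} =
      (LinearMap.ker (innerSL ℝ u : EuclideanSpace ℝ (Fin n) →ₗ[ℝ] ℝ) : Set (EuclideanSpace ℝ (Fin n))) := by
    ext x
    simp only [SetLike.mem_coe, LinearMap.mem_ker, ContinuousLinearMap.coe_coe, innerSL_apply_apply, Set.mem_setOf_eq]
    rw [real_inner_comm]
  rw [hset]
  exact h0

lemma half_ball_vol (ρ : ℝ) (hρ : 0 ≤ ρ) (u : EuclideanSpace ℝ (Fin n)) (hu : ‖u‖ = 1) :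
    volume {x : EuclideanSpace ℝ (Fin n) | ‖x‖ ≤ ρ ∧ 0 ≤ ⟪x, u⟫} =
      ENNReal.ofReal (ρ ^ n) * volume (closedBall (0 : EuclideanSpace ℝ (Fin n)) 1) / 2 := by
  set A : Set (EuclideanSpace ℝ (Fin n)) := {x | ‖x‖ ≤ ρ ∧ 0 ≤ ⟪x, u⟫} with hA
  set A' : Set (EuclideanSpace ℝ (Fin n)) := {x | ‖x‖ ≤ ρ ∧ ⟪x, u⟫ ≤ 0} with hA'
  have hAm : MeasurableSet A := by
    apply IsClosed.measurableSet
    have hc : Continuous fun x : EuclideanSpace ℝ (Fin n) => (⟪x, u⟫ : ℝ) :=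
      Continuous.inner continuous_id' continuous_const
    exact (isClosed_le continuous_norm continuous_const).inter
      (isClosed_le continuous_const hc)
  have hneg : -A = A' := by
    ext x
    simp only [Set.mem_neg, hA, hA', Set.mem_setOf_eq, norm_neg, inner_neg_left]
    constructor
    · rintro ⟨h1, h2⟩; exact ⟨h1, by linarith⟩
    · rintro ⟨h1, h2⟩; exact ⟨h1, by linarith⟩
  have hvol' : volume A' = volume A := by rw [← hneg, Measure.measure_neg]
  have hunion : A ∪ A' = closedBall (0 : EuclideanSpace ℝ (Fin n)) ρ := by
    ext x
    simp only [Set.mem_union, hA, hA', Set.mem_setOf_eq, mem_closedBall_zero_iff]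
    constructor
    · rintro (⟨h, _⟩ | ⟨h, _⟩) <;> exact h
    · intro h
      rcases le_total 0 (⟪x, u⟫ : ℝ) with h' | h'
      · exact Or.inl ⟨h, h'⟩
      · exact Or.inr ⟨h, h'⟩
  have hinter : volume (A ∩ A') = 0 := by
    apply measure_mono_null _ (hyperplane_null u hu)
    rintro x ⟨⟨_, h1⟩, ⟨_, h2⟩⟩
    exact le_antisymm h2 h1
  have key : volume A + volume A = volume (closedBall (0 : EuclideanSpace ℝ (Fin n)) ρ) := by
    have := measure_union_add_inter (μ := volume) A' hAm
    rw [Set.union_comm, Set.inter_comm] at this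
    rw [hunion, hinter, add_zero, hvol'] at this
    exact this.symm
  have hball : volume (closedBall (0 : EuclideanSpace ℝ (Fin n)) ρ) =
      ENNReal.ofReal (ρ ^ n) * volume (closedBall (0 : EuclideanSpace ℝ (Fin n)) 1) := by
    rw [Measure.addHaar_closedBall' volume 0 hρ, finrank_euclideanSpace_fin]
  rw [hball] at key
  rw [ENNReal.eq_div_iff two_ne_zero (by norm_num), two_mul]
  exact key

lemma cap_vol (r ρ : ℝ) (hr0 : 0 < r) (hr1 : r < 1) (hρ : ρ = Real.sqrt (1 - r ^ 2))
    (u : EuclideanSpace ℝ (Fin n)) (hu : ‖u‖ = 1) :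
    volume {x : EuclideanSpace ℝ (Fin n) | ‖x‖ ≤ 1 ∧ r ≤ ⟪x, u⟫} ≤
      ENNReal.ofReal (ρ ^ n) * volume (closedBall (0 : EuclideanSpace ℝ (Fin n)) 1) / 2 := by
  have hρ0 : 0 ≤ ρ := hρ ▸ Real.sqrt_nonneg _
  have hρsq : ρ ^ 2 = 1 - r ^ 2 := by
    rw [hρ]; exact Real.sq_sqrt (by nlinarith)
  have hsub : {x : EuclideanSpace ℝ (Fin n) | ‖x‖ ≤ 1 ∧ r ≤ ⟪x, u⟫} ⊆
      (fun x => (-(r • u)) + x) ⁻¹' {x : EuclideanSpace ℝ (Fin n) | ‖x‖ ≤ ρ ∧ 0 ≤ ⟪x, u⟫} := by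
    rintro x ⟨h1, h2⟩
    have heq : (-(r • u)) + x = x - r • u := by abel
    simp only [Set.mem_preimage, Set.mem_setOf_eq, heq]
    have huu : (⟪u, u⟫ : ℝ) = 1 := by
      rw [real_inner_self_eq_norm_sq, hu]; norm_num
    have hxu : (⟪x - r • u, u⟫ : ℝ) = ⟪x, u⟫ - r := by
      rw [inner_sub_left, real_inner_smul_left, huu, mul_one]
    have hnormsq : ‖x - r • u‖ ^ 2 ≤ ρ ^ 2 := by
      rw [norm_sub_sq_real, real_inner_smul_right, norm_smul, hu, hρsq]
      simp only [Real.norm_eq_abs, abs_of_pos hr0, mul_one]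
      nlinarith [norm_nonneg x, mul_le_mul_of_nonneg_left h2 hr0.le]
    constructor
    · nlinarith [norm_nonneg (x - r • u)]
    · rw [hxu]; linarith
  calc volume {x : EuclideanSpace ℝ (Fin n) | ‖x‖ ≤ 1 ∧ r ≤ ⟪x, u⟫}
      ≤ volume ((fun x => (-(r • u)) + x) ⁻¹'
          {x : EuclideanSpace ℝ (Fin n) | ‖x‖ ≤ ρ ∧ 0 ≤ ⟪x, u⟫}) := measure_mono hsub
    _ = volume {x : EuclideanSpace ℝ (Fin n) | ‖x‖ ≤ ρ ∧ 0 ≤ ⟪x, u⟫} :=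
        measure_preimage_add volume _ _
    _ = ENNReal.ofReal (ρ ^ n) * volume (closedBall (0 : EuclideanSpace ℝ (Fin n)) 1) / 2 :=
        half_ball_vol ρ hρ0 u hu

lemma cap_prob (r ρ : ℝ) (hr0 : 0 < r) (hr1 : r < 1) (hρ : ρ = Real.sqrt (1 - r ^ 2))
    (y : EuclideanSpace ℝ (Fin n)) (hy : y ≠ 0) :
    ((volume (closedBall (0 : EuclideanSpace ℝ (Fin n)) 1))⁻¹ •
        volume.restrict (closedBall (0 : EuclideanSpace ℝ (Fin n)) 1))
      {x : EuclideanSpace ℝ (Fin n) | r * ‖y‖ ≤ ⟪x, y⟫} ≤ ENNReal.ofReal (ρ ^ n) / 2 := by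
  set B := closedBall (0 : EuclideanSpace ℝ (Fin n)) 1 with hB
  have hBfin : volume B ≠ ∞ := measure_closedBall_lt_top.ne
  have hBpos : volume B ≠ 0 := (measure_closedBall_pos volume 0 one_pos).ne'
  have hny : (0 : ℝ) < ‖y‖ := norm_pos_iff.mpr hy
  set u : EuclideanSpace ℝ (Fin n) := ‖y‖⁻¹ • y with hu
  have hu1 : ‖u‖ = 1 := norm_smul_inv_norm hy
  have hSB : {x : EuclideanSpace ℝ (Fin n) | r * ‖y‖ ≤ ⟪x, y⟫} ∩ B =
      {x : EuclideanSpace ℝ (Fin n) | ‖x‖ ≤ 1 ∧ r ≤ ⟪x, u⟫} := by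
    ext x
    have hxu : (⟪x, u⟫ : ℝ) = ⟪x, y⟫ / ‖y‖ := by
      rw [hu, real_inner_smul_right, inv_mul_eq_div]
    simp only [Set.mem_inter_iff, Set.mem_setOf_eq, hB, mem_closedBall_zero_iff, hxu,
      le_div_iff₀ hny]
    tauto
  calc ((volume B)⁻¹ • volume.restrict B) {x : EuclideanSpace ℝ (Fin n) | r * ‖y‖ ≤ ⟪x, y⟫}
      = (volume B)⁻¹ * volume ({x : EuclideanSpace ℝ (Fin n) | r * ‖y‖ ≤ ⟪x, y⟫} ∩ B) := by
        rw [Measure.smul_apply, smul_eq_mul, Measure.restrict_apply' measurableSet_closedBall]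
    _ ≤ (volume B)⁻¹ * (ENNReal.ofReal (ρ ^ n) * volume B / 2) := by
        rw [hSB]
        exact mul_le_mul_right (cap_vol r ρ hr0 hr1 hρ u hu1) _
    _ = (volume B)⁻¹ * volume B * (ENNReal.ofReal (ρ ^ n) / 2) := by
        rw [div_eq_mul_inv, div_eq_mul_inv]; ring
    _ = ENNReal.ofReal (ρ ^ n) / 2 := by
        rw [ENNReal.inv_mul_cancel hBpos hBfin, one_mul]

set_option maxHeartbeats 1000000 in

/-- Corollary 1, first part: if `M < 2(ϑ - rⁿ)/ρⁿ`, then with probability `> 1 - ϑ`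
the last of `M` i.i.d. points uniform in the unit ball is separated from the others:
`⟪xᵢ, x_M⟫ < r ‖x_M‖` for all `i ≠ M`. -/
theorem stochastic_separation_last_point_count_bound
    (n M : ℕ) (hn : 0 < n) (hM : 0 < M)
    (r ϑ ρ : ℝ) (hr : 0 < r) (hr1 : r < 1) (hϑ : 0 < ϑ) (hϑ1 : ϑ < 1)
    (hρ : ρ = Real.sqrt (1 - r ^ 2))
    (hMbound : (M : ℝ) < 2 * (ϑ - r ^ n) / ρ ^ n)
    (Ω : Type*) [MeasurableSpace Ω] (P : Measure Ω) [IsProbabilityMeasure P]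
    (X : Fin M → Ω → EuclideanSpace ℝ (Fin n))
    (hmeas : ∀ i, Measurable (X i))
    (hindep : iIndepFun X P)
    (hdist : ∀ i, Measure.map (X i) P =
      (volume (Metric.closedBall (0 : EuclideanSpace ℝ (Fin n)) 1))⁻¹ •
        volume.restrict (Metric.closedBall (0 : EuclideanSpace ℝ (Fin n)) 1)) :
    (P {ω | ∀ i : Fin M, i ≠ ⟨M - 1, Nat.sub_lt hM Nat.one_pos⟩ →
        ⟪X i ω, X (⟨M - 1, Nat.sub_lt hM Nat.one_pos⟩ : Fin M) ω⟫ <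
          r * ‖X (⟨M - 1, Nat.sub_lt hM Nat.one_pos⟩ : Fin M) ω‖}).toReal > 1 - ϑ := by
  classical
  haveI : Nonempty (Fin n) := ⟨⟨0, hn⟩⟩
  set B := Metric.closedBall (0 : EuclideanSpace ℝ (Fin n)) 1 with hBdef
  set μ : Measure (EuclideanSpace ℝ (Fin n)) := (volume B)⁻¹ • volume.restrict B with hμdef
  have hBfin : volume B ≠ ∞ := measure_closedBall_lt_top.ne
  have hBpos : volume B ≠ 0 := (measure_closedBall_pos volume 0 one_pos).ne'
  have hμuniv : μ Set.univ = 1 := by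
    rw [hμdef, Measure.smul_apply, smul_eq_mul,
      Measure.restrict_apply' measurableSet_closedBall, Set.univ_inter,
      ENNReal.inv_mul_cancel hBpos hBfin]
  set last : Fin M := ⟨M - 1, Nat.sub_lt hM Nat.one_pos⟩ with hlast
  set Y : Ω → EuclideanSpace ℝ (Fin n) := X last with hY
  -- the bad events
  set T : Set (EuclideanSpace ℝ (Fin n) × EuclideanSpace ℝ (Fin n)) :=
    {p | r * ‖p.1‖ ≤ ⟪p.2, p.1⟫} with hT
  have hTc : IsClosed T :=
    isClosed_le (continuous_const.mul (continuous_norm.comp continuous_fst))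
      (continuous_snd.inner continuous_fst)
  have hTm : MeasurableSet T := hTc.measurableSet
  set bad : Fin M → Set Ω := fun i => (fun ω => (Y ω, X i ω)) ⁻¹' T with hbad
  have hbadm : ∀ i, MeasurableSet (bad i) := fun i =>
    ((hmeas last).prodMk (hmeas i)) hTm
  -- probability of each bad event
  have hbadP : ∀ i : Fin M, i ≠ last → P (bad i) ≤ ENNReal.ofReal (ρ ^ n) / 2 := by
    intro i hi
    have hind : IndepFun Y (X i) P := hindep.indepFun (Ne.symm hi)
    have hpair : P.map (fun ω => (Y ω, X i ω)) = μ.prod μ := by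
      rw [(indepFun_iff_map_prod_eq_prod_map_map (hmeas last).aemeasurable
        (hmeas i).aemeasurable).mp hind, hdist, hdist]
    have h1 : P (bad i) = (μ.prod μ) T := by
      rw [hbad, ← Measure.map_apply ((hmeas last).prodMk (hmeas i)) hTm, hpair]
    have h2 : (μ.prod μ) T = ∫⁻ y, μ (Prod.mk y ⁻¹' T) ∂μ := Measure.prod_apply hTm
    have h3 : ∀ᵐ y ∂μ, μ (Prod.mk y ⁻¹' T) ≤ ENNReal.ofReal (ρ ^ n) / 2 := by
      have hzero : μ {(0 : EuclideanSpace ℝ (Fin n))} = 0 := by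
        rw [hμdef, Measure.smul_apply, smul_eq_mul,
          Measure.restrict_apply' measurableSet_closedBall]
        have : volume ({(0 : EuclideanSpace ℝ (Fin n))} ∩ B) = 0 :=
          measure_mono_null Set.inter_subset_left (measure_singleton 0)
        rw [this, mul_zero]
      have hae : ∀ᵐ y ∂μ, y ≠ (0 : EuclideanSpace ℝ (Fin n)) := by
        rw [ae_iff]
        convert hzero using 2
        ext y; simp
      filter_upwards [hae] with y hy
      have : (Prod.mk y ⁻¹' T) = {x : EuclideanSpace ℝ (Fin n) | r * ‖y‖ ≤ ⟪x, y⟫} := rfl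
      rw [this]
      exact cap_prob r ρ hr hr1 hρ y hy
    calc P (bad i) = ∫⁻ y, μ (Prod.mk y ⁻¹' T) ∂μ := by rw [h1, h2]
      _ ≤ ∫⁻ _, ENNReal.ofReal (ρ ^ n) / 2 ∂μ := lintegral_mono_ae h3
      _ = ENNReal.ofReal (ρ ^ n) / 2 := by rw [lintegral_const, hμuniv, mul_one]
  -- the good event is the complement of the union of bad events
  set U : Set Ω := ⋃ i ∈ Finset.univ.erase last, bad i with hU
  have hUm : MeasurableSet U := Finset.measurableSet_biUnion _ fun i _ => hbadm i
  have hGU : {ω | ∀ i : Fin M, i ≠ last →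
      ⟪X i ω, Y ω⟫ < r * ‖Y ω‖} = Uᶜ := by
    ext ω
    simp only [Set.mem_setOf_eq, hU, Set.compl_iUnion, Set.mem_iInter, Set.mem_compl_iff,
      Finset.mem_erase, Finset.mem_univ, and_true, hbad, Set.mem_preimage, hT,
      Set.mem_setOf_eq, not_le]
  have hPU : P U ≤ (M : ℕ) * (ENNReal.ofReal (ρ ^ n) / 2) := by
    calc P U ≤ ∑ i ∈ Finset.univ.erase last, P (bad i) :=
          measure_biUnion_finset_le _ _
      _ ≤ ∑ i ∈ Finset.univ.erase last, ENNReal.ofReal (ρ ^ n) / 2 :=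
          Finset.sum_le_sum fun i hi => hbadP i (Finset.mem_erase.mp hi).1
      _ = (Finset.univ.erase last).card * (ENNReal.ofReal (ρ ^ n) / 2) := by
          rw [Finset.sum_const, nsmul_eq_mul]
      _ ≤ (M : ℕ) * (ENNReal.ofReal (ρ ^ n) / 2) := by
          gcongr
          exact Finset.card_erase_le.trans (by simp)
  -- numeric bound
  have hρpos : 0 < ρ := by
    rw [hρ]; exact Real.sqrt_pos.mpr (by nlinarith)
  have hρn : 0 < ρ ^ n := pow_pos hρpos n
  have hrn : 0 < r ^ n := pow_pos hr n
  have hnum : (M : ℝ) * (ρ ^ n / 2) < ϑ := by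
    have h1 : (M : ℝ) * ρ ^ n < 2 * (ϑ - r ^ n) := (lt_div_iff₀ hρn).mp hMbound
    nlinarith
  have hPUreal : (P U).toReal < ϑ := by
    have hfin : ((M : ℕ) : ℝ≥0∞) * (ENNReal.ofReal (ρ ^ n) / 2) ≠ ⊤ :=
      ENNReal.mul_ne_top (ENNReal.natCast_ne_top M)
        ((ENNReal.div_lt_top ENNReal.ofReal_ne_top (by norm_num)).ne)
    have h1 : (P U).toReal ≤ ((M : ℕ) * (ENNReal.ofReal (ρ ^ n) / 2)).toReal :=
      ENNReal.toReal_mono hfin hPU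
    have h2 : ((M : ℕ) * (ENNReal.ofReal (ρ ^ n) / 2)).toReal = (M : ℝ) * (ρ ^ n / 2) := by
      rw [ENNReal.toReal_mul, ENNReal.toReal_div, ENNReal.toReal_ofReal hρn.le]
      simp
    rw [h2] at h1
    linarith
  have hcompl : P Uᶜ = 1 - P U := prob_compl_eq_one_sub hUm
  rw [hGU, hcompl]
  rw [ENNReal.toReal_sub_of_le prob_le_one one_ne_top, ENNReal.toReal_one]
  linarith
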